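/- arXiv:2510.14430 — 2 statements merged into one kernel-verified Lean document; each statement's English description precedes it below -/
import Mathlib

section
/- Under the assumptions of the averaging theorem, the shrinkage vector ω(ψ) = Λ V α(ψ) is a convex combination of the extreme shrinkage vectors: ω(ψ) = ∑_{τ∈[m,n]} p_τ(ψ) ω_{(τ)}, where p_τ(ψ) = ψ^τ π_τ / ∑_{s∈[m,n]} ψ^s π_s, each p_τ(ψ) ≥ 0, and ∑_τ p_τ(ψ) = 1. -/
open Finset Matrix

/-- `(a,b)` entry `λ_{τ(a)}^{b+1}`: the matrix `S_τᵀ Λ V`. -/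
noncomputable def selLV {m : ℕ} (l : Fin m → ℝ) (n : ℕ) (τ : Finset (Fin m))
    (h : τ.card = n) : Matrix (Fin n) (Fin n) ℝ :=
  Matrix.of fun a b => l (τ.orderEmbOfFin h a) ^ ((b : ℕ) + 1)

/-- The extreme coefficient vector `α_{(τ)} = (S_τᵀ Λ V)⁻¹ 𝟙`. -/
noncomputable def alphaTau {m : ℕ} (l : Fin m → ℝ) (n : ℕ) (τ : Finset (Fin m))
    (h : τ.card = n) : Fin n → ℝ :=
  (selLV l n τ h)⁻¹ *ᵥ (fun _ => 1)

/-- The matrix `Vᵀ Ψ Λ V`, with `(a,b)` entry `∑ i, λ_i^a ψ_i λ_i^{b+1}`. -/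
noncomputable def Bmat {m : ℕ} (l ψ : Fin m → ℝ) (n : ℕ) : Matrix (Fin n) (Fin n) ℝ :=
  Matrix.of fun a b => ∑ i : Fin m, l i ^ (a : ℕ) * ψ i * l i ^ ((b : ℕ) + 1)

/-- The coefficient map `α(ψ) = (Vᵀ Ψ Λ V)⁻¹ Vᵀ ψ`. -/
noncomputable def alphaMap {m : ℕ} (l ψ : Fin m → ℝ) (n : ℕ) : Fin n → ℝ :=
  (Bmat l ψ n)⁻¹ *ᵥ (fun a => ∑ i : Fin m, l i ^ (a : ℕ) * ψ i)

/-- The shrinkage vector `ω(ψ) = Λ V α(ψ)`. -/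
noncomputable def omegaMap {m : ℕ} (l ψ : Fin m → ℝ) (n : ℕ) : Fin m → ℝ :=
  fun i => ∑ j : Fin n, l i ^ ((j : ℕ) + 1) * alphaMap l ψ n j

/-- The relative residual vector `z(ψ) = 𝟙 - ω(ψ)`. -/
noncomputable def zMap {m : ℕ} (l ψ : Fin m → ℝ) (n : ℕ) : Fin m → ℝ :=
  fun i => 1 - omegaMap l ψ n i

/-- `ψ^τ = ∏_{i∈τ} ψ_i`. -/
def psiPow {m : ℕ} (ψ : Fin m → ℝ) (τ : Finset (Fin m)) : ℝ := ∏ i ∈ τ, ψ i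

/-- `π_τ = (∏_{j∈τ} λ_j) ∏_{j<i∈τ} (λ_i - λ_j)²`. -/
def piTau {m : ℕ} (l : Fin m → ℝ) (τ : Finset (Fin m)) : ℝ :=
  (∏ j ∈ τ, l j) * ∏ j ∈ τ, ∏ i ∈ τ.filter (fun x => j < x), (l i - l j) ^ 2

/-- The number of nonzero entries of a vector. -/
noncomputable def suppCard {m : ℕ} (ψ : Fin m → ℝ) : ℕ :=
  ({i : Fin m | ψ i ≠ 0}).ncard

/-- The extreme shrinkage vector `ω_{(τ)} = Λ V (S_τᵀ Λ V)⁻¹ 𝟙`. -/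
noncomputable def omegaTau {m : ℕ} (l : Fin m → ℝ) (n : ℕ) (τ : Finset (Fin m))
    (h : τ.card = n) : Fin m → ℝ :=
  fun i => ∑ j : Fin n, l i ^ ((j : ℕ) + 1) * alphaTau l n τ h j

/-- The averaging weights `p_τ(ψ) = ψ^τ π_τ / ∑_s ψ^s π_s`. -/
noncomputable def pWeight {m n : ℕ} (l ψ : Fin m → ℝ) (τ : Finset (Fin m)) : ℝ :=
  psiPow ψ τ * piTau l τ /
    ∑ s ∈ Finset.powersetCard n (Finset.univ : Finset (Fin m)), psiPow ψ s * piTau l s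


lemma image_orderEmbOfFin {α : Type*} [LinearOrder α] {n : ℕ}
    (τ : Finset α) (h : τ.card = n) :
    Finset.image (τ.orderEmbOfFin h) Finset.univ = τ := by
  apply Finset.coe_injective
  rw [Finset.coe_image, Finset.coe_univ, Set.image_univ, Finset.range_orderEmbOfFin]

lemma prod_orderEmbOfFin' {α : Type*} [LinearOrder α] {n : ℕ} {M : Type*} [CommMonoid M]
    (τ : Finset α) (h : τ.card = n) (f : α → M) :
    ∏ a : Fin n, f (τ.orderEmbOfFin h a) = ∏ i ∈ τ, f i := by
  refine Finset.prod_nbij (τ.orderEmbOfFin h) (fun a _ => τ.orderEmbOfFin_mem h a)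
    (fun a _ b _ hab => (τ.orderEmbOfFin h).injective hab) ?_ (fun _ _ => rfl)
  intro x hx
  obtain ⟨a, rfl⟩ := (τ.range_orderEmbOfFin h ▸ hx : x ∈ Set.range (τ.orderEmbOfFin h))
  exact Set.mem_image_of_mem _ (by simp)

lemma cauchyBinet {m n : ℕ} (ψ : Fin m → ℝ) (A C : Matrix (Fin m) (Fin n) ℝ) :
    (Matrix.of fun a b => ∑ i : Fin m, ψ i * A i a * C i b).det =
    ∑ τ ∈ (Finset.powersetCard n (Finset.univ : Finset (Fin m))).attach,
      (∏ i ∈ τ.1, ψ i) *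
        ((A.submatrix (τ.1.orderEmbOfFin (Finset.mem_powersetCard.mp τ.2).2) id).det *
         (C.submatrix (τ.1.orderEmbOfFin (Finset.mem_powersetCard.mp τ.2).2) id).det) := by
  classical
  -- Step 1: expand by multilinearity in the rows
  have h1 : (Matrix.of fun a b => ∑ i : Fin m, ψ i * A i a * C i b) =
      fun a => ∑ i : Fin m, (ψ i * A i a) • (C i) := by
    funext a b
    simp [Finset.sum_apply, mul_assoc]
  have h2 : (Matrix.of fun a b => ∑ i : Fin m, ψ i * A i a * C i b).det =
      ∑ f : Fin n → Fin m, (∏ a, ψ (f a) * A (f a) a) * (C.submatrix f id).det := by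
    rw [show (Matrix.of fun a b => ∑ i : Fin m, ψ i * A i a * C i b).det =
        Matrix.detRowAlternating (fun a => ∑ i : Fin m, (ψ i * A i a) • (C i)) from by
      rw [← h1]; rfl]
    rw [show (Matrix.detRowAlternating (fun a => ∑ i : Fin m, (ψ i * A i a) • (C i)) : ℝ) =
        Matrix.detRowAlternating.toMultilinearMap
          (fun a => ∑ i : Fin m, (fun a i => (ψ i * A i a) • (C i)) a i) from rfl]
    rw [MultilinearMap.map_sum]
    refine Finset.sum_congr rfl fun f _ => ?_
    rw [show (Matrix.detRowAlternating.toMultilinearMap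
        (fun a => (ψ (f a) * A (f a) a) • (C (f a))) : ℝ) =
      Matrix.detRowAlternating.toMultilinearMap
        (fun a => (fun a => ψ (f a) * A (f a) a) a • (fun a => C (f a)) a) from rfl]
    rw [MultilinearMap.map_smul_univ]
    rfl
  rw [h2]
  set term : (Fin n → Fin m) → ℝ :=
    fun f => (∏ a, ψ (f a) * A (f a) a) * (C.submatrix f id).det with hterm
  show ∑ f : Fin n → Fin m, term f = _
  -- kill non-injective terms
  rw [← Finset.sum_filter_add_sum_filter_not Finset.univ
    (fun f : Fin n → Fin m => Function.Injective f)]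
  have hz : ∑ f ∈ Finset.univ.filter (fun f : Fin n → Fin m => ¬ Function.Injective f),
      term f = 0 := by
    refine Finset.sum_eq_zero fun f hf => ?_
    obtain ⟨a, b, hab, hne⟩ := Function.not_injective_iff.mp (Finset.mem_filter.mp hf).2
    have : (C.submatrix f id).det = 0 := by
      refine Matrix.det_zero_of_row_eq hne ?_
      funext j
      simp [Matrix.submatrix_apply, hab]
    simp [hterm, this]
  rw [hz, add_zero]
  -- expand each RHS term as a sum over permutations
  have expand : ∀ τ : {x // x ∈ Finset.powersetCard n (Finset.univ : Finset (Fin m))},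
      (∏ i ∈ τ.1, ψ i) *
        ((A.submatrix (τ.1.orderEmbOfFin (Finset.mem_powersetCard.mp τ.2).2) id).det *
         (C.submatrix (τ.1.orderEmbOfFin (Finset.mem_powersetCard.mp τ.2).2) id).det) =
      ∑ σ : Equiv.Perm (Fin n),
        term ((τ.1.orderEmbOfFin (Finset.mem_powersetCard.mp τ.2).2) ∘ σ) := by
    rintro ⟨τ, hτ⟩
    set e := τ.orderEmbOfFin (Finset.mem_powersetCard.mp hτ).2 with he
    rw [Matrix.det_apply' (A.submatrix e id)]
    rw [Finset.sum_mul, Finset.mul_sum]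
    refine Finset.sum_congr rfl fun σ _ => ?_
    have hC : (C.submatrix (⇑e ∘ ⇑σ) id).det =
        (Equiv.Perm.sign σ : ℤ) * (C.submatrix e id).det := by
      rw [show C.submatrix (⇑e ∘ ⇑σ) id = (C.submatrix e id).submatrix σ id from rfl,
        Matrix.det_permute]
    have hψ : ∏ a, ψ ((⇑e ∘ ⇑σ) a) * A ((⇑e ∘ ⇑σ) a) a =
        (∏ i ∈ τ, ψ i) * ∏ a, A (e (σ a)) a := by
      rw [Finset.prod_mul_distrib]
      congr 1
      rw [show ∏ a, ψ ((⇑e ∘ ⇑σ) a) = ∏ a, (fun x => ψ (e x)) (σ a) from rfl,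
        Equiv.prod_comp σ (fun x => ψ (e x))]
      exact prod_orderEmbOfFin' τ _ ψ
    rw [hterm]
    simp only [hψ, hC, Matrix.submatrix_apply, id_eq]
    push_cast
    ring
  rw [Finset.sum_congr rfl (fun τ _ => expand τ)]
  -- now a bijection between injective functions and (τ, σ) pairs
  rw [Finset.sum_sigma']
  refine (Finset.sum_bij
    (fun (x : Σ _ : {y // y ∈ Finset.powersetCard n (Finset.univ : Finset (Fin m))},
        Equiv.Perm (Fin n)) _ =>
      (x.1.1.orderEmbOfFin (Finset.mem_powersetCard.mp x.1.2).2) ∘ x.2)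
    ?_ ?_ ?_ ?_).symm
  · rintro ⟨⟨τ, hτ⟩, σ⟩ _
    simp only [Finset.mem_filter, Finset.mem_univ, true_and]
    exact (τ.orderEmbOfFin _).injective.comp σ.injective
  · rintro ⟨⟨τ1, hτ1⟩, σ1⟩ _ ⟨⟨τ2, hτ2⟩, σ2⟩ _ hEq
    dsimp only at hEq
    have key : ∀ (τ : Finset (Fin m)) (hτ : τ ∈ Finset.powersetCard n
          (Finset.univ : Finset (Fin m))) (σ : Equiv.Perm (Fin n)),
        Set.range (⇑(τ.orderEmbOfFin (Finset.mem_powersetCard.mp hτ).2) ∘ ⇑σ)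
          = ↑τ := by
      intro τ hτ σ
      rw [Set.range_comp, Equiv.range_eq_univ, Set.image_univ,
        Finset.range_orderEmbOfFin]
    have himg : τ1 = τ2 := by
      apply Finset.coe_injective
      rw [← key τ1 hτ1 σ1, ← key τ2 hτ2 σ2, hEq]
    subst himg
    have hσ : σ1 = σ2 := by
      apply Equiv.ext
      intro a
      exact (τ1.orderEmbOfFin (Finset.mem_powersetCard.mp hτ1).2).injective
        (congrFun hEq a)
    subst hσ
    rfl
  · intro f hf
    have hfinj : Function.Injective f := (Finset.mem_filter.mp hf).2
    have hcard : (Finset.image f Finset.univ).card = n := by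
      rw [Finset.card_image_of_injective _ hfinj, Finset.card_univ, Fintype.card_fin]
    have hmem : Finset.image f Finset.univ ∈
        Finset.powersetCard n (Finset.univ : Finset (Fin m)) :=
      Finset.mem_powersetCard.mpr ⟨Finset.subset_univ _, hcard⟩
    set e := (Finset.image f Finset.univ).orderEmbOfFin
      (Finset.mem_powersetCard.mp hmem).2 with he
    have hmemf : ∀ a, f a ∈ Finset.image f Finset.univ := fun a =>
      Finset.mem_image_of_mem f (Finset.mem_univ a)
    set s : Fin n → Fin n := fun a =>
      ((Finset.image f Finset.univ).orderIsoOfFin hcard).symm ⟨f a, hmemf a⟩ with hs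
    have hes : ∀ a, e (s a) = f a := by
      intro a
      have := ((Finset.image f Finset.univ).orderIsoOfFin hcard).apply_symm_apply
        ⟨f a, hmemf a⟩
      calc e (s a) = ((Finset.image f Finset.univ).orderIsoOfFin hcard (s a) : Fin m) := rfl
        _ = f a := by rw [this]
    have hsinj : Function.Injective s := by
      intro a b hab
      apply hfinj
      rw [← hes a, ← hes b, hab]
    refine ⟨⟨⟨Finset.image f Finset.univ, hmem⟩,
      Equiv.ofBijective s (Finite.injective_iff_bijective.mp hsinj)⟩,
      Finset.mem_sigma.mpr ⟨Finset.mem_attach _ _, Finset.mem_univ _⟩, ?_⟩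
    funext a
    exact hes a
  · rintro ⟨⟨τ, hτ⟩, σ⟩ _
    rfl

lemma sq_pair_prod {m n : ℕ} (l : Fin m → ℝ) (τ : Finset (Fin m)) (h : τ.card = n) :
    ∏ i : Fin n, ∏ j ∈ Finset.Ioi i,
      (l (τ.orderEmbOfFin h j) - l (τ.orderEmbOfFin h i)) ^ 2
    = ∏ j ∈ τ, ∏ i ∈ τ.filter (fun x => j < x), (l i - l j) ^ 2 := by
  rw [Finset.prod_sigma', Finset.prod_sigma']
  refine Finset.prod_bij
    (fun (x : Σ _ : Fin n, Fin n) _ => (⟨τ.orderEmbOfFin h x.1, τ.orderEmbOfFin h x.2⟩ :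
      Σ _ : Fin m, Fin m)) ?_ ?_ ?_ ?_
  · rintro ⟨i, j⟩ hx
    have hij : i < j := Finset.mem_Ioi.mp (Finset.mem_sigma.mp hx).2
    refine Finset.mem_sigma.mpr ⟨τ.orderEmbOfFin_mem h i, Finset.mem_filter.mpr
      ⟨τ.orderEmbOfFin_mem h j, (τ.orderEmbOfFin h).lt_iff_lt.mpr hij⟩⟩
  · rintro ⟨i, j⟩ _ ⟨i', j'⟩ _ hEq
    simp only [Sigma.ext_iff, heq_eq_eq] at hEq ⊢
    exact ⟨(τ.orderEmbOfFin h).injective hEq.1, (τ.orderEmbOfFin h).injective hEq.2⟩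
  · rintro ⟨a, c⟩ hx
    obtain ⟨ha, hc⟩ := Finset.mem_sigma.mp hx
    have hcτ : c ∈ τ := (Finset.mem_filter.mp hc).1
    have hac : a < c := (Finset.mem_filter.mp hc).2
    refine ⟨⟨(τ.orderIsoOfFin h).symm ⟨a, ha⟩, (τ.orderIsoOfFin h).symm ⟨c, hcτ⟩⟩,
      Finset.mem_sigma.mpr ⟨Finset.mem_univ _, Finset.mem_Ioi.mpr ?_⟩, ?_⟩
    · exact (τ.orderIsoOfFin h).symm.lt_iff_lt.mpr (by exact hac)
    · have h1 : τ.orderEmbOfFin h ((τ.orderIsoOfFin h).symm ⟨a, ha⟩) = a := by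
        have := (τ.orderIsoOfFin h).apply_symm_apply ⟨a, ha⟩
        calc τ.orderEmbOfFin h ((τ.orderIsoOfFin h).symm ⟨a, ha⟩)
            = ((τ.orderIsoOfFin h) ((τ.orderIsoOfFin h).symm ⟨a, ha⟩) : Fin m) := rfl
          _ = a := by rw [this]
      have h2 : τ.orderEmbOfFin h ((τ.orderIsoOfFin h).symm ⟨c, hcτ⟩) = c := by
        have := (τ.orderIsoOfFin h).apply_symm_apply ⟨c, hcτ⟩
        calc τ.orderEmbOfFin h ((τ.orderIsoOfFin h).symm ⟨c, hcτ⟩)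
            = ((τ.orderIsoOfFin h) ((τ.orderIsoOfFin h).symm ⟨c, hcτ⟩) : Fin m) := rfl
          _ = c := by rw [this]
      simp [h1, h2]
  · rintro ⟨i, j⟩ _
    rfl

noncomputable def Amat {m : ℕ} (l : Fin m → ℝ) (n : ℕ) : Matrix (Fin m) (Fin n) ℝ :=
  Matrix.of fun i a => l i ^ (a : ℕ)

noncomputable def Cmat {m : ℕ} (l : Fin m → ℝ) (n : ℕ) : Matrix (Fin m) (Fin n) ℝ :=
  Matrix.of fun i b => l i ^ ((b : ℕ) + 1)

/-- `π_τ` as a product of the two minors. -/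
lemma minor_mul_minor {m n : ℕ} (l : Fin m → ℝ) (τ : Finset (Fin m)) (h : τ.card = n) :
    ((Amat l n).submatrix (τ.orderEmbOfFin h) id).det *
      ((Cmat l n).submatrix (τ.orderEmbOfFin h) id).det = piTau l τ := by
  have hA : ((Amat l n).submatrix (τ.orderEmbOfFin h) id) =
      Matrix.vandermonde (fun a => l (τ.orderEmbOfFin h a)) := rfl
  have hC : ((Cmat l n).submatrix (τ.orderEmbOfFin h) id) =
      Matrix.of (fun a b => l (τ.orderEmbOfFin h a) *
        Matrix.vandermonde (fun x => l (τ.orderEmbOfFin h x)) a b) := by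
    ext a b
    simp only [Matrix.submatrix_apply, Matrix.of_apply, Cmat, Matrix.vandermonde, id_eq]
    ring
  rw [hA, hC, Matrix.det_mul_column, Matrix.det_vandermonde, piTau,
    ← prod_orderEmbOfFin' τ h l, ← sq_pair_prod l τ h]
  have hsq : ∏ i : Fin n, ∏ j ∈ Finset.Ioi i,
      (l (τ.orderEmbOfFin h j) - l (τ.orderEmbOfFin h i)) ^ 2
      = (∏ i : Fin n, ∏ j ∈ Finset.Ioi i,
        (l (τ.orderEmbOfFin h j) - l (τ.orderEmbOfFin h i))) ^ 2 := by
    rw [← Finset.prod_pow]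
    exact Finset.prod_congr rfl fun i _ => Finset.prod_pow _ _ _
  rw [hsq]
  ring

lemma piTau_pos {m : ℕ} {l : Fin m → ℝ} (hpos : ∀ i, 0 < l i)
    (hinj : Function.Injective l) (τ : Finset (Fin m)) : 0 < piTau l τ := by
  refine mul_pos (Finset.prod_pos fun i _ => hpos i) (Finset.prod_pos fun j _ =>
    Finset.prod_pos fun i hi => ?_)
  have hne : i ≠ j := by
    have := (Finset.mem_filter.mp hi).2
    exact fun hij => absurd this (by simp [hij])
  have : l i - l j ≠ 0 := sub_ne_zero.mpr fun hl => hne (hinj hl)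
  positivity

lemma psiPow_nonneg {m : ℕ} {ψ : Fin m → ℝ} (hψ : ∀ i, 0 ≤ ψ i) (τ : Finset (Fin m)) :
    0 ≤ psiPow ψ τ :=
  Finset.prod_nonneg fun i _ => hψ i


lemma Bmat_eq_cb {m : ℕ} (l ψ : Fin m → ℝ) (n : ℕ) :
    Bmat l ψ n = Matrix.of fun a b => ∑ i : Fin m, ψ i * Amat l n i a * Cmat l n i b := by
  ext a b
  simp only [Bmat, Amat, Cmat, Matrix.of_apply]
  exact Finset.sum_congr rfl fun i _ => by ring

lemma Bmat_det {m n : ℕ} (l ψ : Fin m → ℝ) :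
    (Bmat l ψ n).det = ∑ τ ∈ Finset.powersetCard n (Finset.univ : Finset (Fin m)),
      psiPow ψ τ * piTau l τ := by
  rw [Bmat_eq_cb, cauchyBinet,
    ← Finset.sum_attach (Finset.powersetCard n Finset.univ)
      (fun τ => psiPow ψ τ * piTau l τ)]
  exact Finset.sum_congr rfl fun τ _ => by
    rw [minor_mul_minor l τ.1 (Finset.mem_powersetCard.mp τ.2).2, psiPow]

lemma denom_pos {m n : ℕ} {l ψ : Fin m → ℝ} (hpos : ∀ i, 0 < l i)
    (hinj : Function.Injective l) (hψ : ∀ i, 0 ≤ ψ i) (hcard : n ≤ suppCard ψ) :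
    0 < ∑ τ ∈ Finset.powersetCard n (Finset.univ : Finset (Fin m)),
      psiPow ψ τ * piTau l τ := by
  classical
  have hfin : (Finset.univ.filter (fun i => ψ i ≠ 0)).card = suppCard ψ := by
    rw [suppCard, ← Set.ncard_coe_finset]
    congr 1
    ext i
    simp
  obtain ⟨τ0, hsub, hτ0card⟩ := Finset.exists_subset_card_eq (hfin ▸ hcard)
  refine Finset.sum_pos'
    (fun τ _ => mul_nonneg (psiPow_nonneg hψ τ) (piTau_pos hpos hinj τ).le)
    ⟨τ0, Finset.mem_powersetCard.mpr ⟨Finset.subset_univ _, hτ0card⟩,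
     mul_pos (Finset.prod_pos fun i hi => ?_) (piTau_pos hpos hinj τ0)⟩
  exact lt_of_le_of_ne (hψ i) (Ne.symm (Finset.mem_filter.mp (hsub hi)).2)

lemma selLV_eq {m n : ℕ} (l : Fin m → ℝ) (τ : Finset (Fin m)) (h : τ.card = n) :
    selLV l n τ h = (Cmat l n).submatrix (τ.orderEmbOfFin h) id := rfl

lemma selLV_det_ne {m n : ℕ} {l : Fin m → ℝ} (hpos : ∀ i, 0 < l i)
    (hinj : Function.Injective l) (τ : Finset (Fin m)) (h : τ.card = n) :
    (selLV l n τ h).det ≠ 0 := by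
  intro h0
  have h1 := minor_mul_minor l τ h
  rw [selLV_eq] at h0
  rw [h0, mul_zero] at h1
  exact absurd h1.symm (ne_of_gt (piTau_pos hpos hinj τ))

lemma cramer_inv_mulVec {n : ℕ} (M : Matrix (Fin n) (Fin n) ℝ) (hM : M.det ≠ 0)
    (b : Fin n → ℝ) (j : Fin n) :
    M.det * (M⁻¹ *ᵥ b) j = (M.updateCol j b).det := by
  rw [Matrix.inv_def, Ring.inverse_eq_inv', Matrix.smul_mulVec,
    ← Matrix.cramer_eq_adjugate_mulVec]
  simp only [Pi.smul_apply, smul_eq_mul, Matrix.cramer_apply]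
  field_simp

lemma update_det {m n : ℕ} (l ψ : Fin m → ℝ) (j : Fin n) :
    ((Bmat l ψ n).updateCol j (fun a => ∑ i : Fin m, l i ^ (a : ℕ) * ψ i)).det =
    ∑ τ ∈ (Finset.powersetCard n (Finset.univ : Finset (Fin m))).attach,
      psiPow ψ τ.1 *
        (((Amat l n).submatrix
            (τ.1.orderEmbOfFin (Finset.mem_powersetCard.mp τ.2).2) id).det *
         ((selLV l n τ.1 (Finset.mem_powersetCard.mp τ.2).2).updateCol j
            (fun _ => 1)).det) := by
  classical
  have h1 : (Bmat l ψ n).updateCol j (fun a => ∑ i : Fin m, l i ^ (a : ℕ) * ψ i)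
      = Matrix.of fun a b => ∑ i : Fin m, ψ i * Amat l n i a *
          ((Cmat l n).updateCol j (fun _ => 1)) i b := by
    ext a b
    rcases eq_or_ne b j with hb | hb
    · subst hb
      simp only [Matrix.updateCol_apply, if_pos rfl, Matrix.of_apply]
      refine Finset.sum_congr rfl fun i _ => ?_
      simp only [Amat, Matrix.of_apply, Matrix.updateCol_apply, if_pos rfl, if_true]
      ring
    · simp only [Matrix.updateCol_apply, if_neg hb, Matrix.of_apply, Bmat]
      refine Finset.sum_congr rfl fun i _ => ?_
      simp only [Amat, Cmat, Matrix.of_apply, Matrix.updateCol_apply, if_neg hb]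
      ring
  rw [h1, cauchyBinet]
  refine Finset.sum_congr rfl fun τ _ => ?_
  have hmat : ((Cmat l n).updateCol j (fun _ => 1)).submatrix
        (τ.1.orderEmbOfFin (Finset.mem_powersetCard.mp τ.2).2) id
      = (selLV l n τ.1 (Finset.mem_powersetCard.mp τ.2).2).updateCol j
          (fun _ => 1) := by
    ext a b
    rcases eq_or_ne b j with hb | hb <;>
      simp [Matrix.updateCol_apply, hb, selLV, Cmat]
  rw [hmat, psiPow]

lemma alphaMap_comb {m n : ℕ} {l ψ : Fin m → ℝ} (hpos : ∀ i, 0 < l i)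
    (hinj : Function.Injective l) (hψ : ∀ i, 0 ≤ ψ i) (hcard : n ≤ suppCard ψ)
    (j : Fin n) :
    alphaMap l ψ n j =
      ∑ τ ∈ (Finset.powersetCard n (Finset.univ : Finset (Fin m))).attach,
        pWeight (n := n) l ψ τ.1 *
          alphaTau l n τ.1 (Finset.mem_powersetCard.mp τ.2).2 j := by
  have hD : 0 < ∑ τ ∈ Finset.powersetCard n (Finset.univ : Finset (Fin m)),
      psiPow ψ τ * piTau l τ := denom_pos hpos hinj hψ hcard
  have hdetB : (Bmat l ψ n).det ≠ 0 := by rw [Bmat_det]; exact hD.ne'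
  have hcram := cramer_inv_mulVec (Bmat l ψ n) hdetB
    (fun a => ∑ i : Fin m, l i ^ (a : ℕ) * ψ i) j
  have halpha : alphaMap l ψ n j =
      (Bmat l ψ n).det⁻¹ *
        ((Bmat l ψ n).updateCol j (fun a => ∑ i : Fin m, l i ^ (a : ℕ) * ψ i)).det := by
    rw [← hcram, alphaMap]
    field_simp
  rw [halpha, update_det, Finset.mul_sum]
  refine Finset.sum_congr rfl fun τ _ => ?_
  set h := (Finset.mem_powersetCard.mp τ.2).2
  have hC : (selLV l n τ.1 h).det ≠ 0 := selLV_det_ne hpos hinj τ.1 h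
  have h2 : ((selLV l n τ.1 h).updateCol j (fun _ => 1)).det =
      (selLV l n τ.1 h).det * alphaTau l n τ.1 h j := by
    rw [← cramer_inv_mulVec _ hC (fun _ => 1) j, alphaTau]
  rw [h2, pWeight, Bmat_det]
  have h3 : ((Amat l n).submatrix (τ.1.orderEmbOfFin h) id).det *
      (selLV l n τ.1 h).det = piTau l τ.1 := by
    rw [selLV_eq]
    exact minor_mul_minor l τ.1 h
  have h4 : ((Amat l n).submatrix (τ.1.orderEmbOfFin h) id).det *
      ((selLV l n τ.1 h).det * alphaTau l n τ.1 h j) =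
      piTau l τ.1 * alphaTau l n τ.1 h j := by
    rw [← h3]; ring
  rw [h4]
  field_simp

theorem stmt3 {m n : ℕ} (hnm : n < m) (l : Fin m → ℝ) (hpos : ∀ i, 0 < l i)
    (hanti : StrictAnti l) (ψ : Fin m → ℝ) (hψ : ∀ i, 0 ≤ ψ i)
    (hcard : n ≤ suppCard ψ) :
    omegaMap l ψ n =
        ∑ τ ∈ (Finset.powersetCard n (Finset.univ : Finset (Fin m))).attach,
          pWeight (n := n) l ψ τ.1 • omegaTau l n τ.1 (Finset.mem_powersetCard.mp τ.2).2 ∧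
      (∀ τ ∈ Finset.powersetCard n (Finset.univ : Finset (Fin m)),
          0 ≤ pWeight (n := n) l ψ τ) ∧
      ∑ τ ∈ Finset.powersetCard n (Finset.univ : Finset (Fin m)),
          pWeight (n := n) l ψ τ = 1 := by
  have hinj : Function.Injective l := hanti.injective
  have hD : 0 < ∑ τ ∈ Finset.powersetCard n (Finset.univ : Finset (Fin m)),
      psiPow ψ τ * piTau l τ := denom_pos hpos hinj hψ hcard
  refine ⟨?_, ?_, ?_⟩
  · funext i
    rw [Finset.sum_apply]
    simp only [Pi.smul_apply, smul_eq_mul, omegaTau]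
    rw [omegaMap]
    calc ∑ j : Fin n, l i ^ ((j : ℕ) + 1) * alphaMap l ψ n j
        = ∑ j : Fin n, ∑ τ ∈ (Finset.powersetCard n
            (Finset.univ : Finset (Fin m))).attach,
            l i ^ ((j : ℕ) + 1) * (pWeight (n := n) l ψ τ.1 *
              alphaTau l n τ.1 (Finset.mem_powersetCard.mp τ.2).2 j) := by
          refine Finset.sum_congr rfl fun j _ => ?_
          rw [alphaMap_comb hpos hinj hψ hcard j, Finset.mul_sum]
      _ = _ := by
          rw [Finset.sum_comm]
          refine Finset.sum_congr rfl fun τ _ => ?_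
          rw [Finset.mul_sum]
          refine Finset.sum_congr rfl fun j _ => by ring
  · intro τ _
    exact div_nonneg (mul_nonneg (psiPow_nonneg hψ τ) (piTau_pos hpos hinj τ).le)
      hD.le
  · simp only [pWeight]
    rw [← Finset.sum_div, div_self hD.ne']
end

section
/- If z = z(ψ) has no zero entries (cardinality m) and n < m, then z has exactly n sign changes, z_m > 0, and (−1)^n z₁ > 0. -/
open Finset Matrix

/-- Number of sign changes of a vector: `v(y) = #{i : y_i y_{i+1} < 0}`. -/
noncomputable def vCount {m : ℕ} (y : Fin m → ℝ) : ℕ :=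
  {i : Fin m | ∃ h : (i : ℕ) + 1 < m, y i * y ⟨(i : ℕ) + 1, h⟩ < 0}.ncard

/-- Minimal number of sign changes over full-cardinality completions
sign-concordant with `x`. -/
noncomputable def vMin {m : ℕ} (x : Fin m → ℝ) : ℕ :=
  sInf {k | ∃ y : Fin m → ℝ, (∀ i, y i ≠ 0) ∧ (∀ i, 0 ≤ x i * y i) ∧ vCount y = k}

/-- Maximal number of sign changes over full-cardinality completions
sign-concordant with `x`. -/
noncomputable def vMax {m : ℕ} (x : Fin m → ℝ) : ℕ :=
  sSup {k | ∃ y : Fin m → ℝ, (∀ i, y i ≠ 0) ∧ (∀ i, 0 ≤ x i * y i) ∧ vCount y = k}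

open Polynomial
open scoped Classical

noncomputable def chg {m : ℕ} (y : Fin m → ℝ) : Finset (Fin m) :=
  Finset.univ.filter (fun i => ∃ h : (i : ℕ) + 1 < m, y i * y ⟨(i : ℕ) + 1, h⟩ < 0)

theorem vCount_eq_chg {m : ℕ} (y : Fin m → ℝ) :
    ({i : Fin m | ∃ h : (i : ℕ) + 1 < m, y i * y ⟨(i : ℕ) + 1, h⟩ < 0}).ncard = (chg y).card := by
  rw [Set.ncard_eq_toFinset_card']
  congr 1
  ext i
  simp [chg]

theorem exists_chg {m : ℕ} (y : Fin m → ℝ) (hy0 : ∀ i, y i ≠ 0) :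
    ∀ d (a b : Fin m), (b : ℕ) - a = d → a < b → y a * y b < 0 →
      ∃ i : Fin m, a ≤ i ∧ (i : ℕ) + 1 ≤ (b : ℕ) ∧ i ∈ chg y := by
  intro d
  induction d using Nat.strong_induction_on with
  | _ d ih =>
    intro a b hd hab hy
    have hab' : (a : ℕ) + 1 ≤ (b : ℕ) := hab
    have h1 : (a : ℕ) + 1 < m := lt_of_le_of_lt hab' b.2
    set a' : Fin m := ⟨(a : ℕ) + 1, h1⟩ with ha'
    by_cases hc : y a * y a' < 0
    · refine ⟨a, le_refl a, hab', ?_⟩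
      simp only [chg, Finset.mem_filter, Finset.mem_univ, true_and]
      exact ⟨h1, hc⟩
    · push_neg at hc
      have h0 : y a * y a' ≠ 0 := mul_ne_zero (hy0 a) (hy0 a')
      have hpos : 0 < y a * y a' := lt_of_le_of_ne hc (Ne.symm h0)
      have hne : a' < b ∨ a' = b := lt_or_eq_of_le hab'
      have hya' : y a' * y b < 0 := by
        by_contra hnn
        push_neg at hnn
        nlinarith [mul_nonneg hpos.le hnn, mul_self_pos.2 (hy0 a'), hy]
      rcases hne with h | h
      · have hd' : (b : ℕ) - a' < d := by
          have : (a' : ℕ) = a + 1 := rfl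
          omega
        obtain ⟨i, hi1, hi2, hi3⟩ := ih _ hd' a' b rfl h hya'
        refine ⟨i, le_trans ?_ hi1, hi2, hi3⟩
        exact le_of_lt (Fin.lt_iff_val_lt_val.2 (by omega))
      · exfalso; subst h; nlinarith [hya', mul_self_pos.2 (hy0 a')]

theorem subseq_chg_le {m r : ℕ} (y : Fin m → ℝ) (hy0 : ∀ i, y i ≠ 0)
    (σ : Fin r → Fin m) (hσ : StrictMono σ) :
    (Finset.univ.filter (fun t : Fin r =>
      ∃ h : (t : ℕ) + 1 < r, y (σ t) * y (σ ⟨(t : ℕ) + 1, h⟩) < 0)).card ≤ (chg y).card := by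
  have key : ∀ t : Fin r, ∀ h : (t : ℕ) + 1 < r, y (σ t) * y (σ ⟨(t : ℕ) + 1, h⟩) < 0 →
      ∃ i : Fin m, σ t ≤ i ∧ (i : ℕ) + 1 ≤ ((σ ⟨(t : ℕ) + 1, h⟩ : Fin m) : ℕ) ∧ i ∈ chg y := by
    intro t h hlt
    exact exists_chg y hy0 _ (σ t) (σ ⟨(t : ℕ) + 1, h⟩) rfl
      (hσ (Fin.lt_iff_val_lt_val.2 (by simp))) hlt
  choose F hF1 hF2 hF3 using key
  set f : Fin r → Fin m := fun t =>
    if h : ∃ hh : (t : ℕ) + 1 < r, y (σ t) * y (σ ⟨(t : ℕ) + 1, hh⟩) < 0 then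
      F t h.choose h.choose_spec else σ t with hf
  apply Finset.card_le_card_of_injOn f
  · intro t ht
    simp only [Finset.coe_filter, Finset.mem_coe, Set.mem_setOf_eq, Finset.mem_filter, Finset.mem_univ, true_and] at ht
    simp only [hf, dif_pos ht]
    exact hF3 t ht.choose ht.choose_spec
  · intro t ht t' ht' heq
    simp only [Finset.coe_filter, Set.mem_setOf_eq, Finset.mem_univ, true_and] at ht ht'
    by_contra hne
    have hlt : ∀ (u u' : Fin r) (hu : ∃ hh : (u : ℕ) + 1 < r, y (σ u) * y (σ ⟨(u:ℕ)+1, hh⟩) < 0)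
        (hu' : ∃ hh : (u' : ℕ) + 1 < r, y (σ u') * y (σ ⟨(u':ℕ)+1, hh⟩) < 0),
        u < u' → f u < f u' := by
      intro u u' hu hu' huu
      simp only [hf, dif_pos hu, dif_pos hu']
      have h1 : ((F u hu.choose hu.choose_spec : Fin m) : ℕ) + 1
          ≤ ((σ ⟨(u : ℕ) + 1, hu.choose⟩ : Fin m) : ℕ) := hF2 u hu.choose hu.choose_spec
      have h2 : σ (⟨(u : ℕ) + 1, hu.choose⟩ : Fin r) ≤ σ u' := by
        apply hσ.monotone
        exact Fin.le_iff_val_le_val.2 (by exact huu)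
      have h3 : σ u' ≤ F u' hu'.choose hu'.choose_spec := hF1 u' hu'.choose hu'.choose_spec
      have := le_trans h2 h3
      exact Fin.lt_iff_val_lt_val.2 (by omega)
    rcases lt_or_gt_of_ne hne with h | h
    · exact absurd heq (ne_of_lt (hlt t t' ht ht' h))
    · exact absurd heq.symm (ne_of_lt (hlt t' t ht' ht h))

theorem sign_prop {m : ℕ} (y : Fin m → ℝ) (hy0 : ∀ i, y i ≠ 0) (hm : 0 < m) :
    0 < (-1 : ℝ) ^ (chg y).card * (y ⟨0, hm⟩ * y ⟨m - 1, by omega⟩) := by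
  have main : ∀ k, ∀ hk : k < m,
      0 < (-1 : ℝ) ^ (((chg y).filter (fun i : Fin m => (i : ℕ) < k)).card) * (y ⟨0, hm⟩ * y ⟨k, hk⟩) := by
    intro k
    induction k with
    | zero =>
      intro hk
      have : ((chg y).filter (fun i : Fin m => (i : ℕ) < 0)) = ∅ := by
        apply Finset.filter_false_of_mem; intro i _; omega
      rw [this]
      simpa using mul_self_pos.2 (hy0 ⟨0, hm⟩)
    | succ k ih =>
      intro hk
      have hk' : k < m := by omega
      have ihk := ih hk'
      have hsplit : ((chg y).filter (fun i : Fin m => (i : ℕ) < k + 1))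
          = ((chg y).filter (fun i : Fin m => (i : ℕ) < k)) ∪ ((chg y).filter (fun i : Fin m => i = ⟨k, hk'⟩)) := by
        ext i
        simp only [Finset.mem_filter, Finset.mem_union, Fin.ext_iff]
        constructor
        · rintro ⟨h1, h2⟩
          rcases Nat.lt_succ_iff_lt_or_eq.1 h2 with h | h
          · exact Or.inl ⟨h1, h⟩
          · exact Or.inr ⟨h1, h⟩
        · rintro (⟨h1, h2⟩ | ⟨h1, h2⟩)
          · exact ⟨h1, by omega⟩
          · exact ⟨h1, by omega⟩
      have hdisj : Disjoint ((chg y).filter (fun i : Fin m => (i : ℕ) < k))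
          ((chg y).filter (fun i : Fin m => i = ⟨k, hk'⟩)) := by
        rw [Finset.disjoint_left]
        intro i hi1 hi2
        simp only [Finset.mem_filter, Fin.ext_iff] at hi1 hi2
        omega
      have hcard : ((chg y).filter (fun i : Fin m => (i : ℕ) < k + 1)).card
          = ((chg y).filter (fun i : Fin m => (i : ℕ) < k)).card
            + (if (⟨k, hk'⟩ : Fin m) ∈ chg y then 1 else 0) := by
        rw [hsplit, Finset.card_union_of_disjoint hdisj, Finset.filter_eq']
        congr 1
        split <;> simp
      by_cases hmem : (⟨k, hk'⟩ : Fin m) ∈ chg y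
      · have hch : y ⟨k, hk'⟩ * y ⟨k + 1, hk⟩ < 0 := by
          simp only [chg, Finset.mem_filter, Finset.mem_univ, true_and] at hmem
          exact hmem.choose_spec
        rw [hcard, if_pos hmem, pow_succ]
        nlinarith [ihk, hch, mul_self_pos.2 (hy0 ⟨k, hk'⟩)]
      · have hch : 0 < y ⟨k, hk'⟩ * y ⟨k + 1, hk⟩ := by
          simp only [chg, Finset.mem_filter, Finset.mem_univ, true_and] at hmem
          push_neg at hmem
          have := hmem hk
          have hne : y ⟨k, hk'⟩ * y ⟨k + 1, hk⟩ ≠ 0 :=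
            mul_ne_zero (hy0 _) (hy0 _)
          exact lt_of_le_of_ne this (Ne.symm hne)
        rw [hcard, if_neg hmem, Nat.add_zero]
        nlinarith [ihk, hch, mul_self_pos.2 (hy0 ⟨k, hk'⟩)]
  have hfull : (chg y).filter (fun i : Fin m => (i : ℕ) < m - 1) = chg y := by
    apply Finset.filter_true_of_mem
    intro i hi
    simp only [chg, Finset.mem_filter, Finset.mem_univ, true_and] at hi
    obtain ⟨h, -⟩ := hi
    omega
  have := main (m - 1) (by omega)
  rw [hfull] at this
  exact this

theorem chg_roots {m : ℕ} (hm : 0 < m) (l : Fin m → ℝ) (hanti : StrictAnti l)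
    (P : Polynomial ℝ) (hP : P ≠ 0) (y : Fin m → ℝ) (hy : ∀ i, y i = P.eval (l i)) :
    ∃ R : Finset ℝ, R ⊆ P.roots.toFinset ∧ R.card = (chg y).card ∧
      ∀ ρ ∈ R, l ⟨m - 1, by omega⟩ < ρ := by
  have key : ∀ i : Fin m, ∀ h : (i : ℕ) + 1 < m, y i * y ⟨(i : ℕ) + 1, h⟩ < 0 →
      ∃ ρ, l ⟨(i : ℕ) + 1, h⟩ < ρ ∧ ρ < l i ∧ P.eval ρ = 0 := by
    intro i h hlt
    have hab : l ⟨(i : ℕ) + 1, h⟩ < l i := hanti (Fin.lt_iff_val_lt_val.2 (by simp))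
    have hcont : ContinuousOn (fun x => P.eval x) (Set.Icc (l ⟨(i : ℕ) + 1, h⟩) (l i)) :=
      (Polynomial.continuous P).continuousOn
    rcases mul_neg_iff.1 hlt with ⟨h1, h2⟩ | ⟨h1, h2⟩
    · -- y i > 0, y (i+1) < 0 : f a < 0 < f b
      have h0 : (0 : ℝ) ∈ Set.Ioo (P.eval (l ⟨(i : ℕ) + 1, h⟩)) (P.eval (l i)) := by
        constructor
        · rw [← hy]; exact h2
        · rw [← hy]; exact h1
      obtain ⟨ρ, hρ, hval⟩ := intermediate_value_Ioo hab.le hcont h0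
      exact ⟨ρ, hρ.1, hρ.2, hval⟩
    · have h0 : (0 : ℝ) ∈ Set.Ioo (P.eval (l i)) (P.eval (l ⟨(i : ℕ) + 1, h⟩)) := by
        constructor
        · rw [← hy]; exact h1
        · rw [← hy]; exact h2
      obtain ⟨ρ, hρ, hval⟩ := intermediate_value_Ioo' hab.le hcont h0
      exact ⟨ρ, hρ.1, hρ.2, hval⟩
  choose F hF1 hF2 hF3 using key
  set g : Fin m → ℝ := fun i =>
    if h : ∃ hh : (i : ℕ) + 1 < m, y i * y ⟨(i : ℕ) + 1, hh⟩ < 0 then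
      F i h.choose h.choose_spec else 0 with hg
  have hmem : ∀ i ∈ chg y, (∃ hh : (i : ℕ) + 1 < m, y i * y ⟨(i : ℕ) + 1, hh⟩ < 0) := by
    intro i hi
    simpa only [chg, Finset.mem_filter, Finset.mem_univ, true_and] using hi
  have hglow : ∀ i (hi : i ∈ chg y), l ⟨(i : ℕ) + 1, (hmem i hi).choose⟩ < g i := by
    intro i hi
    simp only [hg, dif_pos (hmem i hi)]
    exact hF1 i _ _
  have hghigh : ∀ i (hi : i ∈ chg y), g i < l i := by
    intro i hi
    simp only [hg, dif_pos (hmem i hi)]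
    exact hF2 i _ _
  have hgroot : ∀ i (hi : i ∈ chg y), P.eval (g i) = 0 := by
    intro i hi
    simp only [hg, dif_pos (hmem i hi)]
    exact hF3 i _ _
  have hinj : Set.InjOn g (chg y) := by
    intro i hi j hj heq
    by_contra hne
    have horder : ∀ (u v : Fin m) (hu : u ∈ chg y) (hv : v ∈ chg y), u < v → g v < g u := by
      intro u v hu hv huv
      have h1 : l ⟨(u : ℕ) + 1, (hmem u hu).choose⟩ < g u := hglow u hu
      have h2 : g v < l v := hghigh v hv
      have h3 : l v ≤ l ⟨(u : ℕ) + 1, (hmem u hu).choose⟩ := by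
        apply hanti.antitone
        exact Fin.le_iff_val_le_val.2 (by exact huv)
      linarith
    rcases lt_or_gt_of_ne hne with h | h
    · exact absurd heq (ne_of_gt (horder i j hi hj h))
    · exact absurd heq (ne_of_lt (horder j i hj hi h))
  refine ⟨(chg y).image g, ?_, ?_, ?_⟩
  · intro ρ hρ
    obtain ⟨i, hi, rfl⟩ := Finset.mem_image.1 hρ
    rw [Multiset.mem_toFinset, Polynomial.mem_roots hP]
    exact hgroot i hi
  · exact Finset.card_image_of_injOn hinj
  · intro ρ hρ
    obtain ⟨i, hi, rfl⟩ := Finset.mem_image.1 hρ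
    have h1 := hglow i hi
    have h2 : l ⟨m - 1, by omega⟩ ≤ l ⟨(i : ℕ) + 1, (hmem i hi).choose⟩ := by
      apply hanti.antitone
      have hh := (hmem i hi).choose
      exact Fin.mk_le_mk.2 (by omega)
    linarith

theorem orth_poly {m n : ℕ} (w : Fin m → ℝ) (l : Fin m → ℝ)
    (horth : ∀ a : ℕ, a < n → ∑ i, w i * l i ^ a = 0)
    (q : Polynomial ℝ) (hq : q.natDegree < n) : ∑ i, w i * q.eval (l i) = 0 := by
  have h1 : ∀ i, q.eval (l i) = ∑ a ∈ Finset.range (q.natDegree + 1), q.coeff a * l i ^ a :=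
    fun i => Polynomial.eval_eq_sum_range _
  simp_rw [h1, Finset.mul_sum]
  rw [Finset.sum_comm]
  apply Finset.sum_eq_zero
  intro a ha
  have ha' : a < n := by
    simp only [Finset.mem_range] at ha
    omega
  have : ∑ i, w i * (q.coeff a * l i ^ a) = q.coeff a * ∑ i, w i * l i ^ a := by
    rw [Finset.mul_sum]
    apply Finset.sum_congr rfl
    intros
    ring
  rw [this, horth a ha', mul_zero]

theorem distinct_roots {R : Finset ℝ} {p : Polynomial ℝ} (hp : p ≠ 0)
    (h : ∀ x ∈ R, p.eval x = 0) : R.card ≤ p.natDegree := by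
  calc R.card ≤ p.roots.toFinset.card := by
        apply Finset.card_le_card
        intro x hx
        rw [Multiset.mem_toFinset, Polynomial.mem_roots hp]
        exact h x hx
    _ ≤ Multiset.card p.roots := Multiset.toFinset_card_le _
    _ ≤ p.natDegree := p.card_roots'

theorem orth_lower {m n r : ℕ} (l : Fin m → ℝ) (hanti : StrictAnti l)
    (w : Fin m → ℝ) (S : Finset (Fin m)) (hS : S.card = r) (hr : 0 < r)
    (hw0 : ∀ i ∈ S, w i ≠ 0) (hw1 : ∀ i ∉ S, w i = 0)
    (horth : ∀ a : ℕ, a < n → ∑ i, w i * l i ^ a = 0) :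
    n ≤ (Finset.univ.filter (fun t : Fin r =>
      ∃ h : (t : ℕ) + 1 < r,
        w (S.orderEmbOfFin hS t) * w (S.orderEmbOfFin hS ⟨(t : ℕ) + 1, h⟩) < 0)).card := by
  by_contra hlt
  push_neg at hlt
  set σ : Fin r → Fin m := fun t => S.orderEmbOfFin hS t with hσdef
  set T := Finset.univ.filter (fun t : Fin r =>
      ∃ h : (t : ℕ) + 1 < r, w (σ t) * w (σ ⟨(t : ℕ) + 1, h⟩) < 0) with hT
  set x : Fin r → ℝ := fun t => l (σ t) with hx
  have hxanti : StrictAnti x := fun a b hab => hanti ((S.orderEmbOfFin hS).strictMono hab)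
  set mid : Fin r → ℝ := fun t =>
    if h : (t : ℕ) + 1 < r then (x t + x ⟨(t : ℕ) + 1, h⟩) / 2 else 0 with hmid
  set q : Polynomial ℝ := ∏ t ∈ T, (Polynomial.X - Polynomial.C (mid t)) with hq
  have hdeg : q.natDegree = T.card := by
    rw [hq, Polynomial.natDegree_prod_of_monic _ _ (fun t _ => Polynomial.monic_X_sub_C _)]
    simp [Polynomial.natDegree_X_sub_C]
  -- sign of factors
  have hfac : ∀ s ∈ T, ∀ t : Fin r,
      ((t : ℕ) ≤ (s : ℕ) → mid s < x t) ∧ ((s : ℕ) < (t : ℕ) → x t < mid s) := by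
    intro s hs t
    have hs' : (s : ℕ) + 1 < r := by
      simp only [hT, Finset.mem_filter, Finset.mem_univ, true_and] at hs
      exact hs.choose
    have hmids : mid s = (x s + x ⟨(s : ℕ) + 1, hs'⟩) / 2 := by
      simp only [hmid, dif_pos hs']
    have hlt2 : x ⟨(s : ℕ) + 1, hs'⟩ < x s := hxanti (Fin.lt_iff_val_lt_val.2 (by simp))
    constructor
    · intro hts
      have : x s ≤ x t := hxanti.antitone (Fin.le_iff_val_le_val.2 hts)
      rw [hmids]; linarith
    · intro hst
      have : x t ≤ x ⟨(s : ℕ) + 1, hs'⟩ :=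
        hxanti.antitone (Fin.le_iff_val_le_val.2 (by simp; omega))
      rw [hmids]; linarith
  have heval : ∀ t : Fin r, q.eval (x t) = ∏ s ∈ T, (x t - mid s) := by
    intro t
    simp [hq, Polynomial.eval_prod]
  have hq0 : ∀ t : Fin r, q.eval (x t) ≠ 0 := by
    intro t
    rw [heval]
    apply Finset.prod_ne_zero_iff.2
    intro s hs
    rcases le_or_gt (t : ℕ) (s : ℕ) with h | h
    · have := (hfac s hs t).1 h; intro hc; linarith
    · have := (hfac s hs t).2 h; intro hc; linarith
  -- pair sign of q
  have hqpair : ∀ t : Fin r, ∀ h : (t : ℕ) + 1 < r,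
      (t ∈ T → q.eval (x t) * q.eval (x ⟨(t : ℕ) + 1, h⟩) < 0) ∧
      (t ∉ T → 0 < q.eval (x t) * q.eval (x ⟨(t : ℕ) + 1, h⟩)) := by
    intro t h
    set t' : Fin r := ⟨(t : ℕ) + 1, h⟩ with ht'
    have hprod : q.eval (x t) * q.eval (x t')
        = ∏ s ∈ T, ((x t - mid s) * (x t' - mid s)) := by
      rw [heval, heval, Finset.prod_mul_distrib]
    have hposoff : ∀ s ∈ T, s ≠ t → 0 < (x t - mid s) * (x t' - mid s) := by
      intro s hs hst
      rcases lt_or_gt_of_ne (fun hc => hst (Fin.ext hc) : (s : ℕ) ≠ (t : ℕ)) with hh | hh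
      · -- s < t, so s < t' too : both negative
        have h1 := (hfac s hs t).2 hh
        have h2 := (hfac s hs t').2 (by simp [ht']; omega)
        nlinarith
      · -- t < s : t ≤ s and t' ≤ s : both positive
        have h1 := (hfac s hs t).1 (le_of_lt hh)
        have h2 := (hfac s hs t').1 (by simp [ht']; omega)
        nlinarith
    constructor
    · intro htT
      rw [hprod, ← Finset.mul_prod_erase _ _ htT]
      have hneg : (x t - mid t) * (x t' - mid t) < 0 := by
        have h1 := (hfac t htT t).1 le_rfl
        have h2 := (hfac t htT t').2 (by simp [ht'])
        nlinarith
      have hpos : 0 < ∏ s ∈ T.erase t, ((x t - mid s) * (x t' - mid s)) := by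
        apply Finset.prod_pos
        intro s hs
        exact hposoff s (Finset.mem_of_mem_erase hs) (Finset.ne_of_mem_erase hs)
      nlinarith
    · intro htT
      rw [hprod]
      apply Finset.prod_pos
      intro s hs
      exact hposoff s hs (fun hc => htT (hc ▸ hs))
  -- pair sign of w
  have hwpair : ∀ t : Fin r, ∀ h : (t : ℕ) + 1 < r,
      (t ∈ T → w (σ t) * w (σ ⟨(t : ℕ) + 1, h⟩) < 0) ∧
      (t ∉ T → 0 < w (σ t) * w (σ ⟨(t : ℕ) + 1, h⟩)) := by
    intro t h
    constructor
    · intro htT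
      simp only [hT, Finset.mem_filter, Finset.mem_univ, true_and] at htT
      exact htT.choose_spec
    · intro htT
      simp only [hT, Finset.mem_filter, Finset.mem_univ, true_and] at htT
      push_neg at htT
      have hne : w (σ t) * w (σ ⟨(t : ℕ) + 1, h⟩) ≠ 0 :=
        mul_ne_zero (hw0 _ (Finset.orderEmbOfFin_mem _ _ _)) (hw0 _ (Finset.orderEmbOfFin_mem _ _ _))
      exact lt_of_le_of_ne (htT h) (Ne.symm hne)
  set F : Fin r → ℝ := fun t => w (σ t) * q.eval (x t) with hF
  have hFpair : ∀ t : Fin r, ∀ h : (t : ℕ) + 1 < r, 0 < F t * F ⟨(t : ℕ) + 1, h⟩ := by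
    intro t h
    by_cases htT : t ∈ T
    · have h1 := (hqpair t h).1 htT
      have h2 := (hwpair t h).1 htT
      simp only [hF]
      nlinarith
    · have h1 := (hqpair t h).2 htT
      have h2 := (hwpair t h).2 htT
      simp only [hF]
      nlinarith
  have hF0 : ∀ t : Fin r, F t ≠ 0 := by
    intro t
    exact mul_ne_zero (hw0 _ (Finset.orderEmbOfFin_mem _ _ _)) (hq0 t)
  have hsame : ∀ k, ∀ hk : k < r, 0 < F ⟨0, hr⟩ * F ⟨k, hk⟩ := by
    intro k
    induction k with
    | zero => intro hk; exact mul_self_pos.2 (hF0 _)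
    | succ k ih =>
      intro hk
      have hk' : k < r := by omega
      have h1 := ih hk'
      have h2 := hFpair ⟨k, hk'⟩ hk
      nlinarith [mul_self_pos.2 (hF0 ⟨k, hk'⟩)]
  -- sum is nonzero
  have hsumpos : 0 < F ⟨0, hr⟩ * ∑ t : Fin r, F t := by
    rw [Finset.mul_sum]
    apply Finset.sum_pos
    · intro t _
      have : 0 < F ⟨0, hr⟩ * F ⟨(t : ℕ), t.2⟩ := hsame (t : ℕ) t.2
      simpa using this
    · exact ⟨⟨0, hr⟩, Finset.mem_univ _⟩
  have hsum0 : ∑ t : Fin r, F t = 0 := by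
    have himg : Finset.univ.image σ = S := by
      apply Finset.eq_of_subset_of_card_le
      · intro i hi
        obtain ⟨t, _, rfl⟩ := Finset.mem_image.1 hi
        exact Finset.orderEmbOfFin_mem _ _ _
      · rw [Finset.card_image_of_injective _ (S.orderEmbOfFin hS).injective]
        simp [hS]
    have h1 : ∑ t : Fin r, F t = ∑ i ∈ S, w i * q.eval (l i) := by
      rw [← himg, Finset.sum_image ?_]
      · intro a _ b _ hab
        exact (S.orderEmbOfFin hS).injective hab
    have h2 : ∑ i ∈ S, w i * q.eval (l i) = ∑ i, w i * q.eval (l i) := by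
      apply Finset.sum_subset (Finset.subset_univ S)
      intro i _ hiS
      rw [hw1 i hiS, zero_mul]
    rw [h1, h2]
    exact orth_poly w l horth q (by rw [hdeg]; exact hlt)
  rw [hsum0, mul_zero] at hsumpos
  exact lt_irrefl 0 hsumpos

section Specific
variable {m n : ℕ} (l ψ : Fin m → ℝ)

theorem Bmat_det_ne_zero (hpos : ∀ i, 0 < l i) (hanti : StrictAnti l)
    (hψ : ∀ i, 0 ≤ ψ i) (hcard : n < suppCard ψ) :
    (Bmat l ψ n).det ≠ 0 := by
  intro hdet
  obtain ⟨v, hv0, hv⟩ := (Matrix.exists_mulVec_eq_zero_iff).2 hdet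
  -- quadratic form
  have hquad : v ⬝ᵥ (Bmat l ψ n *ᵥ v) = ∑ i, ψ i * l i * (∑ a : Fin n, v a * l i ^ (a : ℕ)) ^ 2 := by
    simp only [dotProduct, Matrix.mulVec, dotProduct, Bmat, Matrix.of_apply]
    have step : ∀ a : Fin n,
        v a * ∑ b : Fin n, (∑ i, l i ^ (a : ℕ) * ψ i * l i ^ ((b : ℕ) + 1)) * v b
          = ∑ i, ∑ b : Fin n, v a * (l i ^ (a : ℕ) * ψ i * l i ^ ((b : ℕ) + 1)) * v b := by
      intro a
      rw [Finset.mul_sum, Finset.sum_comm]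
      apply Finset.sum_congr rfl
      intro b _
      rw [Finset.sum_mul, Finset.mul_sum]
      apply Finset.sum_congr rfl
      intros; ring
    simp_rw [step]
    rw [Finset.sum_comm]
    apply Finset.sum_congr rfl
    intro i _
    rw [sq, Finset.sum_mul_sum, Finset.mul_sum]
    apply Finset.sum_congr rfl
    intro a _
    rw [Finset.mul_sum]
    apply Finset.sum_congr rfl
    intro b _
    rw [pow_succ]
    ring
  have hzero : v ⬝ᵥ (Bmat l ψ n *ᵥ v) = 0 := by rw [hv]; simp [dotProduct]
  rw [hquad] at hzero
  have hnn : ∀ i ∈ Finset.univ, (0:ℝ) ≤ ψ i * l i * (∑ a : Fin n, v a * l i ^ (a : ℕ)) ^ 2 :=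
    fun i _ => mul_nonneg (mul_nonneg (hψ i) (hpos i).le) (sq_nonneg _)
  have heach := (Finset.sum_eq_zero_iff_of_nonneg hnn).1 hzero
  set S := Finset.univ.filter (fun i : Fin m => ψ i ≠ 0) with hSdef
  have hScard : suppCard ψ = S.card := by
    rw [suppCard, Set.ncard_eq_toFinset_card', Set.toFinset_setOf]
  have hroot : ∀ i ∈ S, ∑ a : Fin n, v a * l i ^ (a : ℕ) = 0 := by
    intro i hi
    simp only [hSdef, Finset.mem_filter, Finset.mem_univ, true_and] at hi
    have h1 := heach i (Finset.mem_univ i)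
    have h2 : 0 < ψ i * l i := mul_pos (lt_of_le_of_ne (hψ i) (Ne.symm hi)) (hpos i)
    have h3 : (∑ a : Fin n, v a * l i ^ (a : ℕ)) ^ 2 = 0 := by
      by_contra hc
      have := lt_of_le_of_ne (sq_nonneg _) (Ne.symm hc)
      nlinarith
    exact pow_eq_zero_iff (by norm_num) |>.1 h3
  set p : Polynomial ℝ := ∑ a : Fin n, Polynomial.C (v a) * Polynomial.X ^ (a : ℕ) with hp
  have hcoeff : ∀ a : Fin n, p.coeff (a : ℕ) = v a := by
    intro a
    rw [hp, Polynomial.finset_sum_coeff]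
    have : ∀ b : Fin n, (Polynomial.C (v b) * Polynomial.X ^ (b : ℕ)).coeff (a : ℕ)
        = if b = a then v b else 0 := by
      intro b
      rw [Polynomial.coeff_C_mul, Polynomial.coeff_X_pow]
      simp [Fin.val_eq_val, eq_comm]
    simp_rw [this]
    simp
  have hpne : p ≠ 0 := by
    obtain ⟨a, ha⟩ := Function.ne_iff.1 hv0
    intro hc
    apply ha
    rw [← hcoeff a, hc]
    simp
  have hdeglt : p.natDegree < n := by
    rw [Polynomial.natDegree_lt_iff_degree_lt hpne]
    apply lt_of_le_of_lt (Polynomial.degree_sum_le _ _)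
    rw [Finset.sup_lt_iff (by exact_mod_cast WithBot.bot_lt_coe n)]
    intro a _
    exact lt_of_le_of_lt (Polynomial.degree_C_mul_X_pow_le _ _)
      (by exact_mod_cast a.2)
  have hevalp : ∀ i ∈ S, p.eval (l i) = 0 := by
    intro i hi
    rw [hp]
    rw [Polynomial.eval_finset_sum]
    simp only [Polynomial.eval_mul, Polynomial.eval_C, Polynomial.eval_pow, Polynomial.eval_X]
    exact hroot i hi
  have hsub : (S.image l).card ≤ p.natDegree := by
    apply distinct_roots hpne
    intro x hx
    obtain ⟨i, hi, rfl⟩ := Finset.mem_image.1 hx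
    exact hevalp i hi
  rw [Finset.card_image_of_injective _ hanti.injective] at hsub
  omega

theorem suppCard_eq (ψ : Fin m → ℝ) :
    suppCard ψ = (Finset.univ.filter (fun i : Fin m => ψ i ≠ 0)).card := by
  rw [suppCard, Set.ncard_eq_toFinset_card', Set.toFinset_setOf]

theorem orth_z (hpos : ∀ i, 0 < l i) (hanti : StrictAnti l)
    (hψ : ∀ i, 0 ≤ ψ i) (hcard : n < suppCard ψ) (a : Fin n) :
    ∑ i, l i ^ (a : ℕ) * (ψ i * zMap l ψ n i) = 0 := by
  have hdet := Bmat_det_ne_zero l ψ hpos hanti hψ hcard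
  have hunit : IsUnit (Bmat l ψ n).det := isUnit_iff_ne_zero.2 hdet
  have hc : Bmat l ψ n *ᵥ alphaMap l ψ n = fun b : Fin n => ∑ i, l i ^ (b : ℕ) * ψ i := by
    rw [alphaMap, Matrix.mulVec_mulVec, Matrix.mul_nonsing_inv _ hunit, Matrix.one_mulVec]
  have hBa : (Bmat l ψ n *ᵥ alphaMap l ψ n) a
      = ∑ i, l i ^ (a : ℕ) * ψ i * omegaMap l ψ n i := by
    simp only [Matrix.mulVec, dotProduct, Bmat, Matrix.of_apply, omegaMap]
    simp_rw [Finset.sum_mul]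
    rw [Finset.sum_comm]
    apply Finset.sum_congr rfl
    intro i _
    rw [Finset.mul_sum]
    apply Finset.sum_congr rfl
    intros
    ring
  have hsplit : ∑ i, l i ^ (a : ℕ) * (ψ i * zMap l ψ n i)
      = (∑ i, l i ^ (a : ℕ) * ψ i) - ∑ i, l i ^ (a : ℕ) * ψ i * omegaMap l ψ n i := by
    rw [← Finset.sum_sub_distrib]
    apply Finset.sum_congr rfl
    intros
    simp only [zMap]
    ring
  rw [hsplit, ← hBa, hc]
  simp

end Specific

theorem stmt13 {m n : ℕ} (hnm : n < m) (l : Fin m → ℝ) (hpos : ∀ i, 0 < l i)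
    (hanti : StrictAnti l) (ψ : Fin m → ℝ) (hψ : ∀ i, 0 ≤ ψ i)
    (hcard : n < suppCard ψ)
    (hfull : ∀ i, zMap l ψ n i ≠ 0) :
    vCount (zMap l ψ n) = n ∧
      0 < zMap l ψ n ⟨m - 1, by omega⟩ ∧
      0 < (-1 : ℝ) ^ n * zMap l ψ n ⟨0, by omega⟩ := by
  classical
  have hm : 0 < m := by omega
  set z : Fin m → ℝ := zMap l ψ n with hz
  set w : Fin m → ℝ := fun i => ψ i * z i with hw
  have hvc : vCount z = (chg z).card := by
    rw [vCount]; exact vCount_eq_chg _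
  have horthn : ∀ a : ℕ, a < n → ∑ i, w i * l i ^ a = 0 := by
    intro a ha
    have h := orth_z l ψ hpos hanti hψ hcard ⟨a, ha⟩
    rw [← h]
    apply Finset.sum_congr rfl
    intros
    simp only [hw]
    ring
  set S := Finset.univ.filter (fun i : Fin m => ψ i ≠ 0) with hS
  have hScard : n < S.card := by rw [← suppCard_eq]; exact hcard
  have hψS : ∀ i ∈ S, 0 < ψ i := by
    intro i hi
    simp only [hS, Finset.mem_filter, Finset.mem_univ, true_and] at hi
    exact lt_of_le_of_ne (hψ i) (Ne.symm hi)
  -- LOWER BOUND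
  have hlower : n ≤ (chg z).card := by
    have hr : 0 < S.card := by omega
    have hlow := orth_lower l hanti w S rfl hr
      (fun i hi => mul_ne_zero (ne_of_gt (hψS i hi)) (hfull i))
      (fun i hi => by
        simp only [hS, Finset.mem_filter, Finset.mem_univ, true_and, not_not] at hi
        simp [hw, hi])
      horthn
    set σ : Fin S.card → Fin m := fun t => S.orderEmbOfFin rfl t with hσ
    have hTeq : (Finset.univ.filter (fun t : Fin S.card =>
        ∃ h : (t : ℕ) + 1 < S.card, w (σ t) * w (σ ⟨(t : ℕ) + 1, h⟩) < 0))
        = (Finset.univ.filter (fun t : Fin S.card =>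
        ∃ h : (t : ℕ) + 1 < S.card, z (σ t) * z (σ ⟨(t : ℕ) + 1, h⟩) < 0)) := by
      apply Finset.filter_congr
      intro t _
      apply exists_congr
      intro h
      have h1 : 0 < ψ (σ t) := hψS _ (Finset.orderEmbOfFin_mem _ _ _)
      have h2 : 0 < ψ (σ ⟨(t : ℕ) + 1, h⟩) := hψS _ (Finset.orderEmbOfFin_mem _ _ _)
      have heqw : w (σ t) * w (σ ⟨(t : ℕ) + 1, h⟩)
          = (ψ (σ t) * ψ (σ ⟨(t : ℕ) + 1, h⟩)) * (z (σ t) * z (σ ⟨(t : ℕ) + 1, h⟩)) := by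
        simp only [hw]; ring
      rw [heqw]
      constructor
      · intro hh; nlinarith [mul_pos h1 h2]
      · intro hh; nlinarith [mul_pos h1 h2]
    rw [hTeq] at hlow
    exact le_trans hlow (subseq_chg_le z hfull σ (S.orderEmbOfFin rfl).strictMono)
  -- THE POLYNOMIAL
  set P : Polynomial ℝ := Polynomial.C 1
      - ∑ j : Fin n, Polynomial.C (alphaMap l ψ n j) * Polynomial.X ^ ((j : ℕ) + 1) with hP
  have hzP : ∀ i, z i = P.eval (l i) := by
    intro i
    simp only [hP, hz, zMap, omegaMap, Polynomial.eval_sub, Polynomial.eval_one,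
      Polynomial.eval_finset_sum, Polynomial.eval_mul, Polynomial.eval_C,
      Polynomial.eval_pow, Polynomial.eval_X, Polynomial.eval_C, _root_.map_one]
    congr 1
    apply Finset.sum_congr rfl
    intros
    ring
  have hP0 : P.eval 0 = 1 := by
    simp only [hP, Polynomial.eval_sub, Polynomial.eval_one, Polynomial.eval_finset_sum,
      Polynomial.eval_mul, Polynomial.eval_C, Polynomial.eval_pow, Polynomial.eval_X]
    rw [Finset.sum_eq_zero (fun j _ => by simp [zero_pow])]
    simp
  have hPne : P ≠ 0 := fun hc => by simp [hc] at hP0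
  have hPdeg : P.natDegree ≤ n := by
    apply Polynomial.natDegree_le_iff_degree_le.2
    apply le_trans (Polynomial.degree_sub_le _ _)
    apply max_le
    · exact le_trans Polynomial.degree_C_le (by exact_mod_cast Nat.cast_nonneg' n)
    · apply le_trans (Polynomial.degree_sum_le _ _)
      apply Finset.sup_le
      intro j _
      exact le_trans (Polynomial.degree_C_mul_X_pow_le _ _) (by exact_mod_cast j.2)
  obtain ⟨R, hR1, hR2, hR3⟩ := chg_roots hm l hanti P hPne z hzP
  -- UPPER BOUND
  have hupper : (chg z).card ≤ n := by
    rw [← hR2]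
    apply le_trans (distinct_roots hPne ?_) hPdeg
    intro x hx
    have := hR1 hx
    rw [Multiset.mem_toFinset, Polynomial.mem_roots hPne] at this
    exact this
  have hcount : (chg z).card = n := le_antisymm hupper hlower
  -- LAST ENTRY POSITIVE
  have hlast : 0 < z ⟨m - 1, by omega⟩ := by
    by_contra hc
    push_neg at hc
    have hneg : z ⟨m - 1, by omega⟩ < 0 := lt_of_le_of_ne hc (hfull _)
    have hlpos : 0 < l ⟨m - 1, by omega⟩ := hpos _
    have hcont : ContinuousOn (fun x => P.eval x) (Set.Icc 0 (l ⟨m - 1, by omega⟩)) :=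
      (Polynomial.continuous P).continuousOn
    have h0mem : (0 : ℝ) ∈ Set.Ioo (P.eval (l ⟨m - 1, by omega⟩)) (P.eval 0) := by
      rw [hP0, ← hzP]
      exact ⟨hneg, one_pos⟩
    obtain ⟨ρ, hρ, hval⟩ := intermediate_value_Ioo' hlpos.le hcont h0mem
    have hρR : ρ ∉ R := by
      intro hc2
      have := hR3 ρ hc2
      exact absurd hρ.2 (not_lt.2 this.le)
    have hsub : (insert ρ R).card ≤ P.natDegree := by
      apply distinct_roots hPne
      intro x hx
      rcases Finset.mem_insert.1 hx with rfl | hx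
      · exact hval
      · have := hR1 hx
        rw [Multiset.mem_toFinset, Polynomial.mem_roots hPne] at this
        exact this
    rw [Finset.card_insert_of_notMem hρR, hR2, hcount] at hsub
    omega
  -- FIRST ENTRY SIGN
  have hsp := sign_prop z hfull hm
  rw [hcount] at hsp
  refine ⟨by rw [hvc, hcount], hlast, ?_⟩
  nlinarith [hsp, hlast]
end
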